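/- Let L be the Laplacian of the path graph P_n (tridiagonal matrix with diagonal entries 1,2,…,2,1 and off-diagonal entries -1). Then the second smallest eigenvalue of L equals 4 sin²(π/(2n)). -/

import Mathlib

open Matrix Real

lemma trig0 (x : ℝ) : Real.cos x - Real.cos (3*x) = (2 - 2*Real.cos (2*x)) * Real.cos x := by
  have h3 : (3:ℝ)*x = 2*x + x := by ring
  rw [h3, Real.cos_add, Real.cos_two_mul, Real.sin_two_mul]
  linear_combination (2*Real.cos x) * (Real.sin_sq_add_cos_sq x)

lemma trig_mid (m : ℕ) (x : ℝ) :
    Real.cos ((2*(m:ℝ)+1)*x) + Real.cos ((2*((m:ℝ)+2)+1)*x)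
      = 2 * Real.cos (2*x) * Real.cos ((2*((m:ℝ)+1)+1)*x) := by
  have h1 : (2*(m:ℝ)+1)*x = (2*((m:ℝ)+1)+1)*x - 2*x := by ring
  have h2 : (2*((m:ℝ)+2)+1)*x = (2*((m:ℝ)+1)+1)*x + 2*x := by ring
  rw [h1, h2, Real.cos_sub, Real.cos_add]; ring

lemma trigN (m K : ℕ) (x : ℝ) (h : 2*((m:ℝ)+2)*x = (K:ℝ)*π) :
    Real.cos ((2*((m:ℝ)+1)+1)*x) - Real.cos ((2*(m:ℝ)+1)*x)
      = (2 - 2*Real.cos (2*x)) * Real.cos ((2*((m:ℝ)+1)+1)*x) := by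
  rw [show (2*((m:ℝ)+1)+1)*x = (K:ℝ)*π - x by linear_combination h,
      show (2*(m:ℝ)+1)*x = (K:ℝ)*π - 3*x by linear_combination h,
      Real.cos_sub, Real.cos_sub, Real.sin_nat_mul_pi]
  simp only [zero_mul, add_zero]
  linear_combination Real.cos ((K:ℝ)*π) * trig0 x

lemma path_spec {n : ℕ} (hn : 2 ≤ n) (L : Matrix (Fin n) (Fin n) ℝ)
    (hLdef : ∀ i j : Fin n,
      L i j = if i = j then (if i.val = 0 ∨ i.val = n - 1 then 1 else 2)
        else if ((i : ℤ) - (j : ℤ)).natAbs = 1 then -1 else 0)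
    (k : Fin n) :
    (4 * Real.sin ((k.val:ℝ) * (π / (2*n))) ^ 2) ∈ spectrum ℝ L := by
  have hn0 : (0:ℝ) < (n:ℝ) := by exact_mod_cast (by omega : 0 < n)
  set x : ℝ := (k.val:ℝ) * (π / (2*n)) with hxdef
  set μ : ℝ := 4 * Real.sin x ^ 2 with hμdef
  set v : Fin n → ℝ := fun i => Real.cos ((2*(i.val:ℝ)+1) * x) with hvdef
  have hμ2 : μ = 2 - 2*Real.cos (2*x) := by
    rw [hμdef, Real.cos_two_mul]
    linear_combination 4 * (Real.sin_sq_add_cos_sq x)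
  -- entry lemmas
  have hdiag : ∀ i : Fin n, L i i = if i.val = 0 ∨ i.val = n-1 then 1 else 2 := fun i => by
    rw [hLdef]; simp
  have hoff : ∀ i j : Fin n, (i.val + 1 = j.val ∨ j.val + 1 = i.val) → L i j = -1 := by
    intro i j h
    rw [hLdef, if_neg (fun he => by subst he; omega), if_pos (by omega)]
  have hzero : ∀ i j : Fin n, i.val ≠ j.val → i.val + 1 ≠ j.val → j.val + 1 ≠ i.val →
      L i j = 0 := by
    intro i j h1 h2 h3
    rw [hLdef, if_neg (fun he => h1 (by rw [he])), if_neg (by omega)]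
  -- the eigen equation
  have key : ∀ i : Fin n, (L *ᵥ v) i = μ * v i := by
    intro i
    have hmv : (L *ᵥ v) i = ∑ j, L i j * v j := rfl
    rcases Nat.lt_trichotomy 0 i.val with h0 | h0 | h0
    · rcases Nat.lt_trichotomy i.val (n-1) with hN | hN | hN
      · -- middle row: 0 < i.val < n-1
        obtain ⟨m, hm⟩ : ∃ m, i.val = m + 1 := ⟨i.val - 1, by omega⟩
        have hma : m < n := by omega
        have hmb : m + 1 < n := by omega
        have hmc : m + 2 < n := by omega
        have hab : (⟨m, hma⟩ : Fin n) ≠ ⟨m+1, hmb⟩ := by simp [Fin.ext_iff]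
        have hbc : (⟨m+1, hmb⟩ : Fin n) ≠ ⟨m+2, hmc⟩ := by simp [Fin.ext_iff]
        have hanotin : (⟨m, hma⟩ : Fin n) ∉ ({⟨m+1, hmb⟩, ⟨m+2, hmc⟩} : Finset (Fin n)) := by
          simp [Fin.ext_iff]
        have hiz : i = ⟨m+1, hmb⟩ := by simp [Fin.ext_iff, hm]
        have hs : ∑ j, L i j * v j
            = L i ⟨m, hma⟩ * v ⟨m, hma⟩ + (L i ⟨m+1, hmb⟩ * v ⟨m+1, hmb⟩
              + L i ⟨m+2, hmc⟩ * v ⟨m+2, hmc⟩) :=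
          calc ∑ j, L i j * v j
              = ∑ j ∈ ({⟨m, hma⟩, ⟨m+1, hmb⟩, ⟨m+2, hmc⟩} : Finset (Fin n)), L i j * v j := by
                refine (Finset.sum_subset (Finset.subset_univ _) ?_).symm
                intro j _ hj
                simp only [Finset.mem_insert, Finset.mem_singleton, Fin.ext_iff] at hj
                push_neg at hj
                rw [hzero i j (by omega) (by omega) (by omega), zero_mul]
            _ = _ := by rw [Finset.sum_insert hanotin, Finset.sum_pair hbc]
        rw [hmv, hs, hiz, hdiag, if_neg (by push_neg; omega),
            hoff _ _ (Or.inr (by simp [hm])), hoff _ _ (Or.inl (by simp [hm])), hμ2]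
        show -1 * Real.cos ((2*((m:ℕ):ℝ)+1)*x) + (2 * Real.cos ((2*((m+1:ℕ):ℝ)+1)*x)
            + -1 * Real.cos ((2*((m+2:ℕ):ℝ)+1)*x))
          = (2 - 2*Real.cos (2*x)) * Real.cos ((2*((m+1:ℕ):ℝ)+1)*x)
        push_cast
        linear_combination - trig_mid m x
      · -- last row: i.val = n-1
        obtain ⟨m, hm⟩ : ∃ m, n = m + 2 := ⟨n - 2, by omega⟩
        have hma : m < n := by omega
        have hmb : m + 1 < n := by omega
        have hab : (⟨m, hma⟩ : Fin n) ≠ ⟨m+1, hmb⟩ := by simp [Fin.ext_iff]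
        have hiz : i = ⟨m+1, hmb⟩ := by simp [Fin.ext_iff]; omega
        have hs : ∑ j, L i j * v j
            = L i ⟨m, hma⟩ * v ⟨m, hma⟩ + L i ⟨m+1, hmb⟩ * v ⟨m+1, hmb⟩ :=
          calc ∑ j, L i j * v j
              = ∑ j ∈ ({⟨m, hma⟩, ⟨m+1, hmb⟩} : Finset (Fin n)), L i j * v j := by
                refine (Finset.sum_subset (Finset.subset_univ _) ?_).symm
                intro j _ hj
                simp only [Finset.mem_insert, Finset.mem_singleton, Fin.ext_iff] at hj
                push_neg at hj
                rw [hzero i j (by omega) (by omega) (by omega), zero_mul]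
            _ = _ := Finset.sum_pair hab
        rw [hmv, hs, hiz, hdiag, if_pos (Or.inr (by simp; omega)),
            hoff _ _ (Or.inr (by simp)), hμ2]
        show -1 * Real.cos ((2*((m:ℕ):ℝ)+1)*x) + 1 * Real.cos ((2*((m+1:ℕ):ℝ)+1)*x)
          = (2 - 2*Real.cos (2*x)) * Real.cos ((2*((m+1:ℕ):ℝ)+1)*x)
        have h2nx : 2*((m:ℝ)+2)*x = (k.val:ℝ)*π := by
          have hcast : ((m:ℝ)+2) = (n:ℝ) := by
            have : ((m+2:ℕ):ℝ) = (n:ℝ) := by rw [hm]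
            push_cast at this; linarith
          rw [hcast, hxdef]
          field_simp
        push_cast
        linear_combination trigN m k.val x h2nx
      · omega
    · -- i.val = 0
      have h1 : (1:ℕ) < n := lt_of_lt_of_le one_lt_two hn
      have hne : (⟨0, by omega⟩ : Fin n) ≠ ⟨1, h1⟩ := by simp [Fin.ext_iff]
      have hiz : i = ⟨0, by omega⟩ := by simp [Fin.ext_iff, h0.symm]
      have hs : ∑ j, L i j * v j = L i ⟨0, by omega⟩ * v ⟨0, by omega⟩ + L i ⟨1, h1⟩ * v ⟨1, h1⟩ :=
        calc ∑ j, L i j * v j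
            = ∑ j ∈ ({⟨0, by omega⟩, ⟨1, h1⟩} : Finset (Fin n)), L i j * v j := by
              refine (Finset.sum_subset (Finset.subset_univ _) ?_).symm
              intro j _ hj
              simp only [Finset.mem_insert, Finset.mem_singleton, Fin.ext_iff] at hj
              push_neg at hj
              rw [hzero i j (by omega) (by omega) (by omega), zero_mul]
          _ = _ := Finset.sum_pair hne
      rw [hmv, hs, hiz, hdiag, if_pos (Or.inl rfl),
          hoff _ _ (Or.inl (by simp)), hμ2]
      show 1 * Real.cos ((2*((0:ℕ):ℝ)+1)*x) + -1 * Real.cos ((2*((1:ℕ):ℝ)+1)*x)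
        = (2 - 2*Real.cos (2*x)) * Real.cos ((2*((0:ℕ):ℝ)+1)*x)
      push_cast
      rw [show (2*(0:ℝ)+1)*x = x by ring, show (2*(1:ℝ)+1)*x = 3*x by ring]
      linear_combination trig0 x
    · omega
  -- nonzero eigenvector gives spectrum membership
  have hx0 : 0 ≤ x := by
    rw [hxdef]; positivity
  have hxlt : x < π/2 := by
    have hk : (k.val:ℝ) < n := by exact_mod_cast k.isLt
    calc x < (n:ℝ) * (π/(2*n)) := by
            rw [hxdef]; exact mul_lt_mul_of_pos_right hk (by positivity)
      _ = π/2 := by field_simp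
  have hv0 : v ⟨0, by omega⟩ ≠ 0 := by
    show Real.cos ((2*((0:ℕ):ℝ)+1)*x) ≠ 0
    push_cast
    rw [show (2*(0:ℝ)+1)*x = x by ring]
    exact ne_of_gt (Real.cos_pos_of_mem_Ioo ⟨by linarith [Real.pi_pos], hxlt⟩)
  have hvne : v ≠ 0 := fun h => hv0 (by rw [h]; rfl)
  rw [spectrum.mem_iff]
  intro hunit
  have hdet : (algebraMap ℝ (Matrix (Fin n) (Fin n) ℝ) μ - L).det = 0 := by
    apply Matrix.exists_mulVec_eq_zero_iff.mp
    refine ⟨v, hvne, ?_⟩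
    rw [Algebra.algebraMap_eq_smul_one, Matrix.sub_mulVec, Matrix.smul_mulVec,
        Matrix.one_mulVec]
    funext i
    simp [key i]
  rw [Matrix.isUnit_iff_isUnit_det, hdet] at hunit
  simp at hunit

/-- The second smallest eigenvalue (algebraic connectivity) of the
Laplacian of the path graph `P_n` equals `4 sin²(π/(2n))`. -/
theorem stmt2 {n : ℕ} (hn : 2 ≤ n)
    (L : Matrix (Fin n) (Fin n) ℝ)
    (hLdef : ∀ i j : Fin n,
      L i j = if i = j then (if i.val = 0 ∨ i.val = n - 1 then 1 else 2)
        else if ((i : ℤ) - (j : ℤ)).natAbs = 1 then -1 else 0)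
    (hL : L.IsHermitian)
    (ev : Fin n → ℝ) (hmono : Monotone ev)
    (hev : ∃ σ : Equiv.Perm (Fin n), ev = hL.eigenvalues ∘ σ) :
    ev ⟨1, lt_of_lt_of_le one_lt_two hn⟩ = 4 * Real.sin (π / (2 * n)) ^ 2 := by
  obtain ⟨σ, hσ⟩ := hev
  have hn0 : (0:ℝ) < (n:ℝ) := by exact_mod_cast (by omega : 0 < n)
  set μf : Fin n → ℝ := fun k => 4 * Real.sin ((k.val:ℝ) * (π / (2*n))) ^ 2 with hμf
  have hmem : ∀ k, μf k ∈ spectrum ℝ L := fun k => path_spec hn L hLdef k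
  have hμmono : StrictMono μf := by
    intro a b hab
    have hπ : 0 < π/(2*(n:ℝ)) := by positivity
    have haval : (a.val:ℝ) < (b.val:ℝ) := by exact_mod_cast hab
    have hbn : (b.val:ℝ) < n := by exact_mod_cast b.isLt
    have ha0 : 0 ≤ (a.val:ℝ) * (π/(2*n)) := by positivity
    have hblt : (b.val:ℝ) * (π/(2*n)) < π/2 := by
      calc (b.val:ℝ) * (π/(2*n)) < (n:ℝ) * (π/(2*n)) := mul_lt_mul_of_pos_right hbn hπ
        _ = π/2 := by field_simp
    have halt : (a.val:ℝ) * (π/(2*n)) < (b.val:ℝ) * (π/(2*n)) :=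
      mul_lt_mul_of_pos_right haval hπ
    have hsa : 0 ≤ Real.sin ((a.val:ℝ)*(π/(2*n))) :=
      Real.sin_nonneg_of_nonneg_of_le_pi ha0 (by linarith [Real.pi_pos])
    have hsin : Real.sin ((a.val:ℝ)*(π/(2*n))) < Real.sin ((b.val:ℝ)*(π/(2*n))) := by
      apply Real.strictMonoOn_sin ⟨by linarith [Real.pi_pos], by linarith⟩
        ⟨by linarith [Real.pi_pos], le_of_lt hblt⟩ halt
    have hsq : Real.sin ((a.val:ℝ)*(π/(2*n)))^2 < Real.sin ((b.val:ℝ)*(π/(2*n)))^2 :=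
      pow_lt_pow_left₀ hsin hsa two_ne_zero
    simp only [hμf]
    linarith
  have hμinj := hμmono.injective
  have himg : Finset.image μf Finset.univ ⊆ Finset.image hL.eigenvalues Finset.univ := by
    intro y hy
    simp only [Finset.mem_image] at *
    obtain ⟨kk, -, rfl⟩ := hy
    have h1 := hmem kk
    rw [hL.spectrum_real_eq_range_eigenvalues] at h1
    obtain ⟨j, hj⟩ := h1
    exact ⟨j, Finset.mem_univ j, hj⟩
  have hcard1 : (Finset.image μf Finset.univ).card = n := by
    rw [Finset.card_image_of_injective _ hμinj, Finset.card_univ, Fintype.card_fin]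
  have heq : Finset.image μf Finset.univ = Finset.image hL.eigenvalues Finset.univ :=
    Finset.eq_of_subset_of_card_le himg
      (by rw [hcard1]
          have h4 : (Finset.image hL.eigenvalues Finset.univ).card
              ≤ (Finset.univ : Finset (Fin n)).card := Finset.card_image_le
          simpa using h4)
  have heig_inj : Function.Injective hL.eigenvalues := by
    have hc : (Finset.univ.image hL.eigenvalues).card = (Finset.univ : Finset (Fin n)).card := by
      rw [← heq, hcard1, Finset.card_univ, Fintype.card_fin]
    have h2 := Finset.injOn_of_card_image_eq hc
    exact fun a b hab => h2 (by simp) (by simp) hab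
  have hrange : Set.range μf = Set.range hL.eigenvalues := by
    have h3 := congrArg (fun s : Finset ℝ => (s : Set ℝ)) heq
    simpa [Finset.coe_image, Set.image_univ] using h3
  have hevinj : Function.Injective ev := by rw [hσ]; exact heig_inj.comp σ.injective
  have hevsm : StrictMono ev := hmono.strictMono_of_injective hevinj
  have hrange2 : Set.range ev = Set.range μf := by
    rw [hσ, σ.surjective.range_comp, hrange]
  haveI : WellFoundedLT (Fin n) := Finite.to_wellFoundedLT
  have hfeq : ev = μf := (StrictMono.range_inj hevsm hμmono).mp hrange2
  rw [hfeq]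
  show 4 * Real.sin ((((1:ℕ)):ℝ) * (π/(2*(n:ℝ))))^2 = _
  norm_num
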